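/- If A₁ is an operator on C^K and A₂ an operator on C^M, and 0 belongs to the numerical range of A₁ or of A₂, then the product numerical range Λ⊗(A₁ ⊗ A₂) is star-shaped with respect to 0. -/

import Mathlib

open Matrix Complex Kronecker Pointwise

/-- The Kronecker (tensor) product of two vectors. -/
def prodVec {K M : ℕ} (x : Fin K → ℂ) (y : Fin M → ℂ) : Fin K × Fin M → ℂ :=
  fun p => x p.1 * y p.2

/-- The product numerical range of an operator on `ℂ^K ⊗ ℂ^M`. -/
def pnr {K M : ℕ} (X : Matrix (Fin K × Fin M) (Fin K × Fin M) ℂ) : Set ℂ :=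
  {z | ∃ (x : Fin K → ℂ) (y : Fin M → ℂ),
    star x ⬝ᵥ x = 1 ∧ star y ⬝ᵥ y = 1 ∧
    star (prodVec x y) ⬝ᵥ X.mulVec (prodVec x y) = z}

/-- The numerical range of an operator on `ℂ^N`. -/
def nr {N : ℕ} (A : Matrix (Fin N) (Fin N) ℂ) : Set ℂ :=
  {z | ∃ x : Fin N → ℂ, star x ⬝ᵥ x = 1 ∧ star x ⬝ᵥ A.mulVec x = z}

lemma phase_exists (c d a : ℂ) : ∃ φ : ℝ,
    ((Complex.exp (-(φ:ℂ)*Complex.I) * c + Complex.exp ((φ:ℂ)*Complex.I) * d)/a).im = 0 := by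
  set f : ℝ → ℝ := fun φ =>
    ((Complex.exp (-(φ:ℂ)*Complex.I) * c + Complex.exp ((φ:ℂ)*Complex.I) * d)/a).im with hf
  have hcont : Continuous f := by fun_prop
  have hpi : f Real.pi = - f 0 := by
    simp only [hf]
    rw [show (-(Real.pi:ℂ)*Complex.I) = -((Real.pi:ℂ)*Complex.I) by ring, Complex.exp_neg,
      Complex.exp_pi_mul_I]
    norm_num [neg_div, div_eq_mul_inv]
    ring
  rcases le_total (f 0) 0 with h|h
  · have h0 : (0:ℝ) ∈ Set.Icc (f 0) (f Real.pi) := ⟨h, by rw [hpi]; linarith⟩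
    obtain ⟨φ, _, hφ⟩ := intermediate_value_Icc Real.pi_pos.le hcont.continuousOn h0
    exact ⟨φ, hφ⟩
  · have h0 : (0:ℝ) ∈ Set.Icc (f Real.pi) (f 0) := ⟨by rw [hpi]; linarith, h⟩
    obtain ⟨φ, _, hφ⟩ := intermediate_value_Icc' Real.pi_pos.le hcont.continuousOn h0
    exact ⟨φ, hφ⟩

lemma dot_star_self (n:ℕ) (x : Fin n → ℂ) : star x ⬝ᵥ x = ((∑ i, Complex.normSq (x i) : ℝ):ℂ) := by
  push_cast
  simp [dotProduct, Complex.normSq_eq_conj_mul_self]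

lemma dot_star_self_eq_zero (n:ℕ) (x : Fin n → ℂ) (h : star x ⬝ᵥ x = 0) : x = 0 := by
  rw [dot_star_self] at h
  have h2 : (∑ i, Complex.normSq (x i) : ℝ) = 0 := by exact_mod_cast h
  funext i
  have := (Finset.sum_eq_zero_iff_of_nonneg (fun i _ => Complex.normSq_nonneg (x i))).mp h2 i (Finset.mem_univ i)
  simpa using Complex.normSq_eq_zero.mp this

lemma dot_expand (n:ℕ) (B : Matrix (Fin n) (Fin n) ℂ) (u v : Fin n → ℂ) (α β : ℂ) :
    star (α•u + β•v) ⬝ᵥ B.mulVec (α•u+β•v)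
      = star α*α*(star u ⬝ᵥ B.mulVec u) + star α*β*(star u ⬝ᵥ B.mulVec v)
        + star β*α*(star v ⬝ᵥ B.mulVec u) + star β*β*(star v ⬝ᵥ B.mulVec v) := by
  simp only [star_add, star_smul, Matrix.mulVec_add, Matrix.mulVec_smul, add_dotProduct,
    smul_dotProduct, dotProduct_add, dotProduct_smul, smul_eq_mul]
  ring

lemma dot_expand' (n:ℕ) (u v : Fin n → ℂ) (α β : ℂ) :
    star (α•u + β•v) ⬝ᵥ (α•u+β•v)
      = star α*α*(star u ⬝ᵥ u) + star α*β*(star u ⬝ᵥ v)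
        + star β*α*(star v ⬝ᵥ u) + star β*β*(star v ⬝ᵥ v) := by
  simp only [star_add, star_smul, add_dotProduct, smul_dotProduct, dotProduct_add,
    dotProduct_smul, smul_eq_mul]
  ring

lemma dot_conj_symm (n:ℕ) (u v : Fin n → ℂ) : star v ⬝ᵥ u = starRingEnd ℂ (star u ⬝ᵥ v) := by
  simp only [dotProduct, map_sum, Pi.star_apply]
  exact Finset.sum_congr rfl fun i _ => by
    simp only [RCLike.star_def, _root_.map_mul, Complex.conj_conj]; ring

lemma nr_segment {N : ℕ} (A : Matrix (Fin N) (Fin N) ℂ) (h0 : (0:ℂ) ∈ nr A) {a : ℂ}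
    (ha : a ∈ nr A) {t : ℝ} (ht0 : 0 ≤ t) (ht1 : t ≤ 1) : (t:ℂ) * a ∈ nr A := by
  obtain ⟨u, hu1, hu0⟩ := h0
  obtain ⟨v, hv1, hva⟩ := ha
  by_cases haz : a = 0
  · exact ⟨u, hu1, by rw [hu0, haz, mul_zero]⟩
  obtain ⟨φ, hφ⟩ := phase_exists (star u ⬝ᵥ A.mulVec v) (star v ⬝ᵥ A.mulVec u) a
  set e : ℂ := Complex.exp ((φ:ℂ)*Complex.I) with he_def
  have he : Complex.exp (-(φ:ℂ)*Complex.I) = star e := by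
    rw [he_def, RCLike.star_def, ← Complex.exp_conj]
    congr 1
    simp [Complex.conj_ofReal]
  have hee : (starRingEnd ℂ) e * e = 1 := by
    rw [← RCLike.star_def, ← he, he_def, ← Complex.exp_add,
      show -(φ:ℂ)*Complex.I + (φ:ℂ)*Complex.I = 0 by ring, Complex.exp_zero]
  set u' : Fin N → ℂ := e • u with hu'_def
  have hu'1 : star u' ⬝ᵥ u' = 1 := by
    rw [hu'_def, star_smul, smul_dotProduct, dotProduct_smul, hu1]
    simp only [smul_eq_mul, mul_one, RCLike.star_def]
    exact hee
  have hu'0 : star u' ⬝ᵥ A.mulVec u' = 0 := by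
    rw [hu'_def, star_smul, Matrix.mulVec_smul, smul_dotProduct, dotProduct_smul, hu0]
    simp
  set c' : ℂ := star u' ⬝ᵥ A.mulVec v with hc'
  set d' : ℂ := star v ⬝ᵥ A.mulVec u' with hd'
  have him : ((c' + d')/a).im = 0 := by
    rw [hc', hd', hu'_def, star_smul, smul_dotProduct, Matrix.mulVec_smul, dotProduct_smul,
      smul_eq_mul, smul_eq_mul, ← he]
    convert hφ using 4
  set w : ℝ := ((c' + d')/a).re with hw_def
  have hw : c' + d' = a * (w:ℝ) := by
    have : (c'+d')/a = ((w:ℝ):ℂ) := Complex.ext rfl (by rw [him]; simp)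
    field_simp at this
    rw [this]
  set p : ℂ := star u' ⬝ᵥ v with hp
  set ψ : ℝ → (Fin N → ℂ) := fun s => ((1-s : ℝ):ℂ) • u' + ((s : ℝ):ℂ) • v with hψ
  have hQ : ∀ s:ℝ, star (ψ s) ⬝ᵥ A.mulVec (ψ s) = a * ((s^2 + s*(1-s)*w : ℝ):ℂ) := by
    intro s
    rw [hψ]
    rw [dot_expand N A u' v _ _, hu'0, hva, ← hc', ← hd']
    simp only [RCLike.star_def, Complex.conj_ofReal]
    push_cast
    linear_combination (((1:ℂ)-s)*s) * hw
  set Rr : ℝ → ℝ := fun s => (1-s)^2 + s^2 + 2*s*(1-s)*p.re with hRr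
  have hR : ∀ s:ℝ, star (ψ s) ⬝ᵥ (ψ s) = ((Rr s : ℝ):ℂ) := by
    intro s
    rw [hψ, hRr]
    rw [dot_expand' N u' v _ _, hu'1, hv1, ← hp, dot_conj_symm, ← hp]
    simp only [RCLike.star_def, Complex.conj_ofReal]
    have hpc : p + starRingEnd ℂ p = ((2*p.re : ℝ):ℂ) := Complex.add_conj p
    push_cast at hpc ⊢
    linear_combination (((1:ℂ)-s)*s) * hpc
  have hRpos : ∀ s ∈ Set.Icc (0:ℝ) 1, 0 < Rr s := by
    intro s hs
    have hnn : 0 ≤ Rr s := by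
      have := hR s
      rw [dot_star_self] at this
      have h2 : (∑ i, Complex.normSq (ψ s i) : ℝ) = Rr s := by exact_mod_cast this
      rw [← h2]
      exact Finset.sum_nonneg fun i _ => Complex.normSq_nonneg _
    rcases hnn.lt_or_eq with h|h
    · exact h
    exfalso
    have hz : ψ s = 0 := by
      apply dot_star_self_eq_zero
      rw [hR s, ← h]
      simp
    by_cases hs0 : s = 0
    · rw [hψ] at hz
      simp only [hs0] at hz
      norm_num at hz
      rw [hz] at hu'1
      simp at hu'1
    · have hv' : v = (-(((1-s:ℝ):ℂ))/((s:ℝ):ℂ)) • u' := by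
        have hsne : ((s:ℝ):ℂ) ≠ 0 := by exact_mod_cast hs0
        rw [hψ] at hz
        funext i
        have := congrFun hz i
        simp only [Pi.add_apply, Pi.smul_apply, smul_eq_mul, Pi.zero_apply] at this
        simp only [Pi.smul_apply, smul_eq_mul]
        field_simp
        push_cast at this ⊢
        linear_combination this
      apply haz
      rw [← hva, hv', star_smul, Matrix.mulVec_smul, smul_dotProduct, dotProduct_smul,
        smul_eq_mul, smul_eq_mul, hu'0]
      ring
  set h : ℝ → ℝ := fun s => (s^2 + s*(1-s)*w) / Rr s with hh
  have hcont : ContinuousOn h (Set.Icc 0 1) := by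
    apply ContinuousOn.div
    · fun_prop
    · fun_prop
    · exact fun s hs => (hRpos s hs).ne'
  have h0' : h 0 = 0 := by simp [hh, hRr]
  have h1' : h 1 = 1 := by norm_num [hh, hRr]
  have htmem : t ∈ Set.Icc (h 0) (h 1) := by rw [h0', h1']; exact ⟨ht0, ht1⟩
  obtain ⟨s, hs, hst⟩ := intermediate_value_Icc (by norm_num : (0:ℝ) ≤ 1) hcont htmem
  have hRs := hRpos s hs
  refine ⟨(((Real.sqrt (Rr s))⁻¹ : ℝ):ℂ) • ψ s, ?_, ?_⟩
  · rw [star_smul, smul_dotProduct, dotProduct_smul, hR s]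
    simp only [RCLike.star_def, Complex.conj_ofReal, smul_eq_mul]
    norm_cast
    rw [← mul_assoc, ← Real.sqrt_inv, Real.mul_self_sqrt (inv_nonneg.mpr hRs.le)]
    exact inv_mul_cancel₀ hRs.ne'
  · rw [star_smul, Matrix.mulVec_smul, smul_dotProduct, dotProduct_smul, hQ s]
    simp only [RCLike.star_def, Complex.conj_ofReal, smul_eq_mul]
    have hsq : ((Real.sqrt (Rr s))⁻¹ : ℝ) * (Real.sqrt (Rr s))⁻¹ = (Rr s)⁻¹ := by
      rw [← Real.sqrt_inv, Real.mul_self_sqrt (inv_nonneg.mpr hRs.le)]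
    have hq : (Rr s)⁻¹ * (s^2 + s*(1-s)*w) = t := by
      rw [inv_mul_eq_div, ← hst, hh]
    rw [← mul_assoc]
    calc ((((Real.sqrt (Rr s))⁻¹ : ℝ)):ℂ) * ((((Real.sqrt (Rr s))⁻¹ : ℝ)):ℂ)
          * (a * ((s^2 + s*(1-s)*w : ℝ):ℂ))
        = a * ((((Real.sqrt (Rr s))⁻¹ * (Real.sqrt (Rr s))⁻¹ * (s^2 + s*(1-s)*w) : ℝ)):ℂ) := by
          push_cast; ring
      _ = a * (((t:ℝ)):ℂ) := by rw [hsq, hq]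
      _ = (t:ℂ) * a := mul_comm _ _

lemma pnr_factor {K M : ℕ} (A₁ : Matrix (Fin K) (Fin K) ℂ) (A₂ : Matrix (Fin M) (Fin M) ℂ)
    (x : Fin K → ℂ) (y : Fin M → ℂ) :
    star (prodVec x y) ⬝ᵥ (A₁ ⊗ₖ A₂).mulVec (prodVec x y)
      = (star x ⬝ᵥ A₁.mulVec x) * (star y ⬝ᵥ A₂.mulVec y) := by
  have L : star (prodVec x y) ⬝ᵥ (A₁ ⊗ₖ A₂).mulVec (prodVec x y)
      = ∑ k, ∑ m, ∑ k', ∑ m',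
        (star (x k) * A₁ k k' * x k') * (star (y m) * A₂ m m' * y m') := by
    simp only [dotProduct, mulVec, kroneckerMap_apply, kroneckerMap, of_apply, prodVec,
      Pi.star_apply, Fintype.sum_prod_type, Finset.mul_sum]
    refine Finset.sum_congr rfl fun k _ => Finset.sum_congr rfl fun m _ =>
      Finset.sum_congr rfl fun k' _ => Finset.sum_congr rfl fun m' _ => ?_
    simp [star_mul']
    ring
  have R : (star x ⬝ᵥ A₁.mulVec x) * (star y ⬝ᵥ A₂.mulVec y)
      = ∑ k, ∑ m, ∑ k', ∑ m',
        (star (x k) * A₁ k k' * x k') * (star (y m) * A₂ m m' * y m') := by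
    rw [dotProduct, dotProduct, Finset.sum_mul_sum]
    refine Finset.sum_congr rfl fun k _ => Finset.sum_congr rfl fun m _ => ?_
    rw [show (star x) k * (A₁.mulVec x k) * ((star y) m * A₂.mulVec y m)
        = (∑ k', star (x k) * A₁ k k' * x k') * (∑ m', star (y m) * A₂ m m' * y m') by
      simp [mulVec, dotProduct, Finset.mul_sum, Finset.sum_mul, mul_assoc],
      Finset.sum_mul_sum]
  rw [L, R]

theorem pnr_kronecker_starShaped {K M : ℕ}
    (A₁ : Matrix (Fin K) (Fin K) ℂ) (A₂ : Matrix (Fin M) (Fin M) ℂ)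
    (h0 : 0 ∈ nr A₁ ∨ 0 ∈ nr A₂) :
    ∀ s ∈ pnr (A₁ ⊗ₖ A₂), ∀ t : ℝ, 0 ≤ t → t ≤ 1 →
      (t : ℂ) * s ∈ pnr (A₁ ⊗ₖ A₂) := by
  rintro s ⟨x, y, hx, hy, hs⟩ t ht0 ht1
  rw [pnr_factor] at hs
  rcases h0 with h0 | h0
  · obtain ⟨x', hx'1, hx'⟩ := nr_segment A₁ h0 ⟨x, hx, rfl⟩ ht0 ht1
    exact ⟨x', y, hx'1, hy, by rw [pnr_factor, hx', ← hs]; ring⟩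
  · obtain ⟨y', hy'1, hy'⟩ := nr_segment A₂ h0 ⟨y, hy, rfl⟩ ht0 ht1
    exact ⟨x, y', hx, hy'1, by rw [pnr_factor, hy', ← hs]; ring⟩
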